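/- Let ℓ₁ > 0 and let G be a probability measure on [0, ℓ₁] with p₁ := G({ℓ₁}) > 0. Let ψ, Ψ : [0, ∞) × [0, ℓ₁] → ℝ be measurable with 0 ≤ ψ(u, ℓ) ≤ Ψ(u, ℓ) ≤ 1 for all u, ℓ. Let c₁ > 0, R₁ > 0 and C > 0 be constants. Assume: (i) Ψ(u, ℓ₁)/(c₁ e^{−R₁ u}) → 1 as u → ∞; (ii) ψ(u, ℓ₁)/Ψ(u, ℓ₁) → C as u → ∞; (iii) there is a function R : [0, ℓ₁) → ℝ with R(ℓ) > R₁ for every ℓ ∈ [0, ℓ₁) and Ψ(u, ℓ) ≤ e^{−R(ℓ) u} for all u ≥ 0 and ℓ ∈ [0, ℓ₁). Then, as u → ∞, ∫_{[0,ℓ₁]} ψ(u, ℓ) dG(ℓ) ∼ p₁ · C · c₁ · e^{−R₁ u} and ∫_{[0,ℓ₁]} Ψ(u, ℓ) dG(ℓ) ∼ p₁ · c₁ · e^{−R₁ u}; in particular the ratio of the two integrals tends to C. -/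

import Mathlib

open MeasureTheory Filter Real Set

/-- Endpoint-atom case (Theorem 3): if the mixing measure `G` on `[0, ℓ₁]` has an atom of mass
`p₁ > 0` at the endpoint `ℓ₁`, the classical ruin probability at `ℓ₁` satisfies
`Ψ(u,ℓ₁) ∼ c₁ e^{−R₁u}`, the modified-to-classical ratio at `ℓ₁` tends to `C`, and intensities
below `ℓ₁` obey a Lundberg bound with strictly larger adjustment coefficient, then
`∫ψ(u,ℓ)dG ∼ p₁·C·c₁·e^{−R₁u}`, `∫Ψ(u,ℓ)dG ∼ p₁·c₁·e^{−R₁u}`, and the ratio of the two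
integrals tends to `C`. -/
theorem endpoint_atom_asymptotics
    (ℓ₁ : ℝ) (hℓ₁ : 0 < ℓ₁)
    (G : Measure ℝ) [IsProbabilityMeasure G] (hGsupp : G (Set.Icc 0 ℓ₁)ᶜ = 0)
    (p₁ : ℝ) (hp₁def : p₁ = (G {ℓ₁}).toReal) (hp₁pos : 0 < p₁)
    (ψ Ψ : ℝ → ℝ → ℝ)
    (hψmeas : ∀ u, 0 ≤ u → Measurable (ψ u)) (hΨmeas : ∀ u, 0 ≤ u → Measurable (Ψ u))
    (horder : ∀ u, 0 ≤ u → ∀ ℓ ∈ Set.Icc 0 ℓ₁,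
      0 ≤ ψ u ℓ ∧ ψ u ℓ ≤ Ψ u ℓ ∧ Ψ u ℓ ≤ 1)
    (c₁ R₁ C : ℝ) (hc₁ : 0 < c₁) (hR₁ : 0 < R₁) (hC : 0 < C)
    (hΨ_asymp : Tendsto (fun u => Ψ u ℓ₁ / (c₁ * Real.exp (-R₁ * u))) atTop (nhds 1))
    (hratio : Tendsto (fun u => ψ u ℓ₁ / Ψ u ℓ₁) atTop (nhds C))
    (R : ℝ → ℝ) (hR : ∀ ℓ ∈ Set.Ico 0 ℓ₁, R₁ < R ℓ)
    (hLundberg : ∀ u, 0 ≤ u → ∀ ℓ ∈ Set.Ico 0 ℓ₁, Ψ u ℓ ≤ Real.exp (-(R ℓ) * u)) :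
    Tendsto (fun u => (∫ ℓ, ψ u ℓ ∂G) / (p₁ * C * c₁ * Real.exp (-R₁ * u))) atTop (nhds 1) ∧
    Tendsto (fun u => (∫ ℓ, Ψ u ℓ ∂G) / (p₁ * c₁ * Real.exp (-R₁ * u))) atTop (nhds 1) ∧
    Tendsto (fun u => (∫ ℓ, ψ u ℓ ∂G) / (∫ ℓ, Ψ u ℓ ∂G)) atTop (nhds C) := by
  have hℓ₁mem : ℓ₁ ∈ Set.Icc (0:ℝ) ℓ₁ := ⟨hℓ₁.le, le_refl _⟩
  have hae : ∀ᵐ ℓ ∂G, ℓ ∈ Set.Icc 0 ℓ₁ := by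
    rw [ae_iff]
    simpa [Set.compl_def] using hGsupp
  -- integrability
  have hintΨ : ∀ u, 0 ≤ u → Integrable (Ψ u) G := by
    intro u hu
    refine Integrable.mono' (integrable_const 1) (hΨmeas u hu).aestronglyMeasurable ?_
    refine hae.mono fun ℓ hℓ => ?_
    have h := horder u hu ℓ hℓ
    rw [Real.norm_eq_abs, abs_of_nonneg (h.1.trans h.2.1)]
    exact h.2.2
  have hintψ : ∀ u, 0 ≤ u → Integrable (ψ u) G := by
    intro u hu
    refine Integrable.mono' (integrable_const 1) (hψmeas u hu).aestronglyMeasurable ?_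
    refine hae.mono fun ℓ hℓ => ?_
    have h := horder u hu ℓ hℓ
    rw [Real.norm_eq_abs, abs_of_nonneg h.1]
    exact h.2.1.trans h.2.2
  -- splitting lemma
  have haeset : (({ℓ₁} : Set ℝ)ᶜ : Set ℝ) =ᵐ[G] Set.Ico 0 ℓ₁ := by
    rw [MeasureTheory.ae_eq_set]
    constructor
    · refine measure_mono_null ?_ hGsupp
      rintro ℓ ⟨hne, hni⟩ hIcc
      exact hni ⟨hIcc.1, lt_of_le_of_ne hIcc.2 hne⟩
    · have : Set.Ico 0 ℓ₁ \ ({ℓ₁} : Set ℝ)ᶜ = ∅ := by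
        ext ℓ
        simp only [Set.mem_diff, Set.mem_Ico, Set.mem_compl_iff, Set.mem_singleton_iff,
          not_not, Set.mem_empty_iff_false, iff_false]
        rintro ⟨⟨_, hlt⟩, rfl⟩
        exact lt_irrefl _ hlt
      rw [this, measure_empty]
  have hsplit : ∀ (f : ℝ → ℝ), Integrable f G →
      ∫ ℓ, f ℓ ∂G = f ℓ₁ * p₁ + ∫ ℓ in Set.Ico 0 ℓ₁, f ℓ ∂G := by
    intro f hi
    have h1 : (∫ ℓ in ({ℓ₁} : Set ℝ), f ℓ ∂G) + ∫ ℓ in ({ℓ₁} : Set ℝ)ᶜ, f ℓ ∂G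
        = ∫ ℓ, f ℓ ∂G := integral_add_compl (measurableSet_singleton ℓ₁) hi
    have h2 : (∫ ℓ in ({ℓ₁} : Set ℝ), f ℓ ∂G) = f ℓ₁ * p₁ := by
      rw [Measure.restrict_singleton, integral_smul_measure, integral_dirac, hp₁def,
        smul_eq_mul, mul_comm]
    rw [setIntegral_congr_set haeset, h2] at h1
    linarith
  -- remainder for Ψ tends to 0 (after normalization) by dominated convergence
  have hremΨ : Tendsto (fun u => ∫ ℓ in Set.Ico 0 ℓ₁, Ψ u ℓ * Real.exp (R₁ * u) ∂G)
      atTop (nhds 0) := by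
    have key := tendsto_integral_filter_of_dominated_convergence
      (μ := G.restrict (Set.Ico 0 ℓ₁)) (l := atTop)
      (F := fun u ℓ => Ψ u ℓ * Real.exp (R₁ * u)) (f := fun _ => (0:ℝ))
      (bound := fun _ => (1:ℝ))
      (by
        filter_upwards [eventually_ge_atTop (0:ℝ)] with u hu
        exact ((hΨmeas u hu).mul_const _).aestronglyMeasurable)
      (by
        filter_upwards [eventually_ge_atTop (0:ℝ)] with u hu
        filter_upwards [ae_restrict_mem measurableSet_Ico] with ℓ hℓ
        have hIcc : ℓ ∈ Set.Icc (0:ℝ) ℓ₁ := ⟨hℓ.1, hℓ.2.le⟩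
        have h0 := (horder u hu ℓ hIcc).1.trans (horder u hu ℓ hIcc).2.1
        rw [Real.norm_eq_abs, abs_of_nonneg (mul_nonneg h0 (Real.exp_pos _).le)]
        have h1 : Ψ u ℓ * Real.exp (R₁ * u) ≤
            Real.exp (-(R ℓ) * u) * Real.exp (R₁ * u) :=
          mul_le_mul_of_nonneg_right (hLundberg u hu ℓ hℓ) (Real.exp_pos _).le
        refine h1.trans ?_
        rw [← Real.exp_add]
        rw [Real.exp_le_one_iff]
        nlinarith [hR ℓ hℓ])
      (integrable_const 1)
      (by
        filter_upwards [ae_restrict_mem measurableSet_Ico] with ℓ hℓ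
        have hIcc : ℓ ∈ Set.Icc (0:ℝ) ℓ₁ := ⟨hℓ.1, hℓ.2.le⟩
        refine squeeze_zero' (g := fun u => Real.exp ((R₁ - R ℓ) * u)) ?_ ?_ ?_
        · filter_upwards [eventually_ge_atTop (0:ℝ)] with u hu
          exact mul_nonneg ((horder u hu ℓ hIcc).1.trans (horder u hu ℓ hIcc).2.1)
            (Real.exp_pos _).le
        · show ∀ᶠ u in atTop, Ψ u ℓ * Real.exp (R₁ * u) ≤ Real.exp ((R₁ - R ℓ) * u)
          filter_upwards [eventually_ge_atTop (0:ℝ)] with u hu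
          have h1 : Ψ u ℓ * Real.exp (R₁ * u) ≤
              Real.exp (-(R ℓ) * u) * Real.exp (R₁ * u) :=
            mul_le_mul_of_nonneg_right (hLundberg u hu ℓ hℓ) (Real.exp_pos _).le
          refine h1.trans ?_
          rw [← Real.exp_add]
          apply le_of_eq
          ring_nf
        · have hlin : Tendsto (fun u : ℝ => (R₁ - R ℓ) * u) atTop atBot := by
            rw [tendsto_const_mul_atBot_of_neg (by linarith [hR ℓ hℓ] : R₁ - R ℓ < 0)]
            exact tendsto_id
          exact Real.tendsto_exp_atBot.comp hlin)
    simpa using key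
  -- remainder for ψ tends to 0
  have hremψ : Tendsto (fun u => ∫ ℓ in Set.Ico 0 ℓ₁, ψ u ℓ * Real.exp (R₁ * u) ∂G)
      atTop (nhds 0) := by
    refine squeeze_zero' ?_ ?_ hremΨ
    · filter_upwards [eventually_ge_atTop (0:ℝ)] with u hu
      refine integral_nonneg_of_ae ?_
      filter_upwards [ae_restrict_mem measurableSet_Ico] with ℓ hℓ
      exact mul_nonneg (horder u hu ℓ ⟨hℓ.1, hℓ.2.le⟩).1 (Real.exp_pos _).le
    · filter_upwards [eventually_ge_atTop (0:ℝ)] with u hu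
      refine integral_mono_ae (((hintψ u hu).restrict).mul_const _)
        (((hintΨ u hu).restrict).mul_const _) ?_
      filter_upwards [ae_restrict_mem measurableSet_Ico] with ℓ hℓ
      exact mul_le_mul_of_nonneg_right (horder u hu ℓ ⟨hℓ.1, hℓ.2.le⟩).2.1
        (Real.exp_pos _).le
  -- Ψ main asymptotics
  have hΨmain : Tendsto (fun u => (∫ ℓ, Ψ u ℓ ∂G) / (p₁ * c₁ * Real.exp (-R₁ * u)))
      atTop (nhds 1) := by
    have key := hΨ_asymp.add (hremΨ.div_const (p₁ * c₁))
    rw [zero_div, add_zero] at key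
    refine key.congr' ?_
    filter_upwards [eventually_ge_atTop (0:ℝ)] with u hu
    rw [hsplit (Ψ u) (hintΨ u hu), integral_mul_const]
    have hE : Real.exp (-R₁ * u) = (Real.exp (R₁ * u))⁻¹ := by
      rw [show (-R₁ * u) = -(R₁ * u) by ring, Real.exp_neg]
    rw [hE]
    field_simp
  -- ψ at the endpoint
  have hψ1 : Tendsto (fun u => ψ u ℓ₁ / (c₁ * Real.exp (-R₁ * u))) atTop (nhds C) := by
    have key := hratio.mul hΨ_asymp
    rw [mul_one] at key
    refine key.congr' ?_
    filter_upwards [eventually_ge_atTop (0:ℝ)] with u hu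
    have h := horder u hu ℓ₁ hℓ₁mem
    by_cases hz : Ψ u ℓ₁ = 0
    · have hzψ : ψ u ℓ₁ = 0 := le_antisymm (hz ▸ h.2.1) h.1
      simp [hz, hzψ]
    · rw [div_mul_div_comm, mul_comm (ψ u ℓ₁) (Ψ u ℓ₁), mul_div_mul_left _ _ hz]
  -- ψ main asymptotics
  have hψmain : Tendsto (fun u => (∫ ℓ, ψ u ℓ ∂G) / (p₁ * C * c₁ * Real.exp (-R₁ * u)))
      atTop (nhds 1) := by
    have key := (hψ1.div_const C).add (hremψ.div_const (p₁ * C * c₁))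
    rw [zero_div, add_zero, div_self hC.ne'] at key
    refine key.congr' ?_
    filter_upwards [eventually_ge_atTop (0:ℝ)] with u hu
    rw [hsplit (ψ u) (hintψ u hu), integral_mul_const]
    have hE : Real.exp (-R₁ * u) = (Real.exp (R₁ * u))⁻¹ := by
      rw [show (-R₁ * u) = -(R₁ * u) by ring, Real.exp_neg]
    rw [hE]
    field_simp
  refine ⟨hψmain, hΨmain, ?_⟩
  -- the ratio
  have hpos : ∀ᶠ u in atTop, 0 < ∫ ℓ, Ψ u ℓ ∂G := by
    have h2 := hΨmain.eventually (eventually_gt_nhds (by norm_num : (1:ℝ)/2 < 1))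
    filter_upwards [h2, eventually_ge_atTop (0:ℝ)] with u hu hu0
    have hden : 0 < p₁ * c₁ * Real.exp (-R₁ * u) := by positivity
    by_contra hle
    push_neg at hle
    have : (∫ ℓ, Ψ u ℓ ∂G) / (p₁ * c₁ * Real.exp (-R₁ * u)) ≤ 0 :=
      div_nonpos_of_nonpos_of_nonneg hle hden.le
    linarith
  have key := (hψmain.div hΨmain one_ne_zero).const_mul C
  rw [one_div_one, mul_one] at key
  refine key.congr' ?_
  filter_upwards [hpos, eventually_ge_atTop (0:ℝ)] with u huB hu0
  have hE : Real.exp (-R₁ * u) ≠ 0 := Real.exp_ne_zero _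
  rw [Pi.div_apply]
  field_simp
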